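/- Let X be an n×d real matrix of rank d, y ∈ ℝⁿ, K = XᵀX, θ* = K⁻¹Xᵀy, and let (x₁,y₁), (x₂,y₂) ∈ ℝᵈ × ℝ be two additional points. Let θ₁* be the least squares solution after adding (x₁,y₁) to the data. With squared loss ℓ(θ,(x,y)) = ½(⟨θ,x⟩ − y)², one has ℓ(θ₁*,(x₂,y₂)) − ℓ(θ*,(x₂,y₂)) = ℓ(θ*,(x₁,y₁))·(x₁ᵀK⁻¹x₂/(1 + x₁ᵀK⁻¹x₁))² − (⟨θ*,x₁⟩ − y₁)(⟨θ*,x₂⟩ − y₂)·x₁ᵀK⁻¹x₂/(1 + x₁ᵀK⁻¹x₁). -/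

import Mathlib

open Matrix

lemma rank_full_injective {n d : ℕ} (X : Matrix (Fin n) (Fin d) ℝ) (hX : X.rank = d) :
    ∀ v : Fin d → ℝ, X *ᵥ v = 0 → v = 0 := by
  have h : LinearMap.ker X.mulVecLin = ⊥ := by
    have h1 := LinearMap.finrank_range_add_finrank_ker X.mulVecLin
    rw [Matrix.rank] at hX
    rw [hX, Module.finrank_pi] at h1
    simp only [Fintype.card_fin] at h1
    have h2 : Module.finrank ℝ (LinearMap.ker X.mulVecLin) = 0 := by omega
    exact Submodule.finrank_eq_zero.mp h2
  intro v hv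
  have : v ∈ LinearMap.ker X.mulVecLin := by simpa [Matrix.mulVecLin_apply] using hv
  simpa [h] using this

/-- Squared loss at a point. -/
noncomputable def sqLoss {d : ℕ} (θ x : Fin d → ℝ) (y : ℝ) : ℝ :=
  (1 / 2) * (θ ⬝ᵥ x - y) ^ 2

theorem canary_interference_ls {n d : ℕ}
    (X : Matrix (Fin n) (Fin d) ℝ) (hX : X.rank = d)
    (y : Fin n → ℝ) (x₁ x₂ : Fin d → ℝ) (y₁ y₂ : ℝ)
    (K : Matrix (Fin d) (Fin d) ℝ) (hK : K = Xᵀ * X)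
    (θs : Fin d → ℝ) (hθs : θs = K⁻¹ *ᵥ (Xᵀ *ᵥ y))
    (Xt : Matrix (Fin (n + 1)) (Fin d) ℝ) (hXt : Xt = Matrix.of (Fin.snoc (fun i => X i) x₁))
    (yt : Fin (n + 1) → ℝ) (hyt : yt = Fin.snoc y y₁)
    (θ₁ : Fin d → ℝ) (hθ₁ : θ₁ = (Xtᵀ * Xt)⁻¹ *ᵥ (Xtᵀ *ᵥ yt)) :
    sqLoss θ₁ x₂ y₂ - sqLoss θs x₂ y₂ =
      sqLoss θs x₁ y₁ * (x₁ ⬝ᵥ (K⁻¹ *ᵥ x₂) / (1 + x₁ ⬝ᵥ (K⁻¹ *ᵥ x₁))) ^ 2 -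
        (θs ⬝ᵥ x₁ - y₁) * (θs ⬝ᵥ x₂ - y₂) *
          (x₁ ⬝ᵥ (K⁻¹ *ᵥ x₂) / (1 + x₁ ⬝ᵥ (K⁻¹ *ᵥ x₁))) := by
  have hinj := rank_full_injective X hX
  -- K is positive definite
  have hKpd : K.PosDef := by
    refine PosDef.of_dotProduct_mulVec_pos ?_ fun v hv => ?_
    · rw [hK, ← conjTranspose_eq_transpose_of_trivial]
      exact isHermitian_conjTranspose_mul_self X
    · have hXv : X *ᵥ v ≠ 0 := fun h => hv (hinj v h)
      have : v ⬝ᵥ (K *ᵥ v) = (X *ᵥ v) ⬝ᵥ (X *ᵥ v) := by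
        rw [hK, ← mulVec_mulVec, dotProduct_mulVec, vecMul_transpose]
      rw [show star v = v from rfl, this]
      exact lt_of_le_of_ne (Finset.sum_nonneg fun i _ => mul_self_nonneg _)
        (fun h => hXv (dotProduct_self_eq_zero.mp h.symm))
  have hKdet : IsUnit K.det := (Matrix.isUnit_iff_isUnit_det K).mp hKpd.isUnit
  have hKinv : K⁻¹.PosDef := hKpd.inv
  have ha : 0 ≤ x₁ ⬝ᵥ (K⁻¹ *ᵥ x₁) := by simpa using (posSemidef_iff_dotProduct_mulVec.mp hKinv.posSemidef).2 x₁
  have hden : (0:ℝ) < 1 + x₁ ⬝ᵥ (K⁻¹ *ᵥ x₁) := by linarith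
  have hden' : (1:ℝ) + x₁ ⬝ᵥ (K⁻¹ *ᵥ x₁) ≠ 0 := ne_of_gt hden
  -- augmented normal equations data
  have hXtX : Xtᵀ * Xt = K + vecMulVec x₁ x₁ := by
    ext i j
    simp [hXt, hK, Matrix.mul_apply, vecMulVec_apply, Fin.sum_univ_castSucc]
  have hXty : Xtᵀ *ᵥ yt = Xᵀ *ᵥ y + y₁ • x₁ := by
    ext i
    simp [hXt, hyt, Matrix.mulVec, dotProduct, Fin.sum_univ_castSucc, mul_comm]
  have hvmv : ∀ v : Fin d → ℝ, vecMulVec x₁ x₁ *ᵥ v = (x₁ ⬝ᵥ v) • x₁ := by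
    intro v
    ext i
    simp only [Matrix.mulVec, dotProduct, vecMulVec_apply, Pi.smul_apply, smul_eq_mul,
      Finset.sum_mul]
    exact Finset.sum_congr rfl fun j _ => by ring
  have hXtXpd : (Xtᵀ * Xt).PosDef := by
    rw [hXtX]
    refine hKpd.add_posSemidef ?_
    rw [vecMulVec_eq Unit x₁ x₁, show Matrix.replicateCol Unit x₁ = (Matrix.replicateRow Unit x₁)ᴴ by
      rw [conjTranspose_replicateRow]; rfl]
    exact posSemidef_conjTranspose_mul_self _
  have hXtXdet : IsUnit (Xtᵀ * Xt).det := (Matrix.isUnit_iff_isUnit_det _).mp hXtXpd.isUnit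
  -- abbreviations
  set a := x₁ ⬝ᵥ (K⁻¹ *ᵥ x₁) with ha_def
  set e₁ := θs ⬝ᵥ x₁ - y₁ with he₁
  set b := K⁻¹ *ᵥ x₁ with hb
  set θ' := θs - (e₁ / (1 + a)) • b with hθ'
  have hKθs : K *ᵥ θs = Xᵀ *ᵥ y := by
    rw [hθs, mulVec_mulVec, mul_nonsing_inv _ hKdet, one_mulVec]
  have hKb : K *ᵥ b = x₁ := by
    rw [hb, mulVec_mulVec, mul_nonsing_inv _ hKdet, one_mulVec]
  have hx₁θ' : x₁ ⬝ᵥ θ' = θs ⬝ᵥ x₁ - e₁ / (1 + a) * a := by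
    rw [hθ', dotProduct_sub, dotProduct_smul, smul_eq_mul, dotProduct_comm x₁ θs, ha_def, hb]
  -- θ' solves the augmented normal equations
  have hsolve : (Xtᵀ * Xt) *ᵥ θ' = Xtᵀ *ᵥ yt := by
    rw [hXtX, hXty, add_mulVec, hvmv, hx₁θ']
    rw [hθ', mulVec_sub, mulVec_smul, hKθs, hKb]
    ext i
    simp only [Pi.add_apply, Pi.sub_apply, Pi.smul_apply, smul_eq_mul]
    have : θs ⬝ᵥ x₁ - e₁ / (1 + a) * a = y₁ + e₁ / (1 + a) := by
      field_simp [he₁]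
      ring
    rw [this]
    ring
  have hθ₁' : θ₁ = θ' := by
    rw [hθ₁, ← hsolve, mulVec_mulVec, nonsing_inv_mul _ hXtXdet, one_mulVec]
  -- symmetry of K⁻¹
  have hKsymm : K⁻¹ᵀ = K⁻¹ := by
    rw [transpose_nonsing_inv]
    congr 1
    rw [hK, transpose_mul, transpose_transpose]
  have hbx₂ : b ⬝ᵥ x₂ = x₁ ⬝ᵥ (K⁻¹ *ᵥ x₂) := by
    rw [hb, dotProduct_comm, ← hKsymm, dotProduct_mulVec, vecMul_transpose, dotProduct_comm, hKsymm]
  have hθ₁x₂ : θ₁ ⬝ᵥ x₂ = θs ⬝ᵥ x₂ - e₁ / (1 + a) * (x₁ ⬝ᵥ (K⁻¹ *ᵥ x₂)) := by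
    rw [hθ₁', hθ', sub_dotProduct, smul_dotProduct, smul_eq_mul, hbx₂]
  simp only [sqLoss, hθ₁x₂, he₁]
  field_simp
  ring
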